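/- Neveu's inequality: let q ∈ (1,2]. For a nonnegative random variable X with E[X^q] < ∞ define V_q(X) = E[X^q] - (E[X])^q. Then for independent nonnegative random variables X, Y with finite q-th moments, V_q(X+Y) ≤ V_q(X) + V_q(Y). -/

import Mathlib

open MeasureTheory ProbabilityTheory Set

lemma aux_cont {p : ℝ} (hp : 0 < p) (c : ℝ) :
    ContinuousOn (fun x : ℝ => (x + c) ^ p - x ^ p) (Set.Ici 0) := by
  intro x _
  have hadd : ContinuousAt (fun x : ℝ => x + c) x := continuousAt_id.add continuousAt_const
  have h1 : ContinuousAt (fun x : ℝ => (x + c) ^ p) x :=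
    hadd.rpow_const (Or.inr hp.le)
  exact (h1.sub (Real.continuousAt_rpow_const x p (Or.inr hp.le))).continuousWithinAt

lemma aux_hasDeriv {p : ℝ} (c : ℝ) (hc : 0 ≤ c) {x : ℝ} (hx : 0 < x) :
    HasDerivAt (fun x : ℝ => (x + c) ^ p - x ^ p)
      (p * (x + c) ^ (p - 1) - p * x ^ (p - 1)) x := by
  have h1 : HasDerivAt (fun x : ℝ => (x + c) ^ p) (p * (x + c) ^ (p - 1)) x := by
    have := (Real.hasDerivAt_rpow_const (p := p)
      (x := x + c) (Or.inl (by positivity))).comp x ((hasDerivAt_id x).add_const c)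
    simpa [Function.comp_def] using this
  exact h1.sub (Real.hasDerivAt_rpow_const (Or.inl hx.ne'))

lemma aux_antitone {p : ℝ} (hp0 : 0 < p) (hp1 : p ≤ 1) (c : ℝ) (hc : 0 ≤ c) :
    AntitoneOn (fun x : ℝ => (x + c) ^ p - x ^ p) (Set.Ici 0) := by
  refine antitoneOn_of_deriv_nonpos (convex_Ici 0) (aux_cont hp0 c) ?_ ?_
  · rw [interior_Ici]
    intro x hx
    exact (aux_hasDeriv c hc hx).differentiableAt.differentiableWithinAt
  · rw [interior_Ici]
    intro x hx
    rw [(aux_hasDeriv c hc hx).deriv]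
    have : (x + c) ^ (p - 1) ≤ x ^ (p - 1) :=
      Real.rpow_le_rpow_of_nonpos hx (by linarith) (by linarith)
    nlinarith

lemma aux_concave {q : ℝ} (hq1 : 1 < q) (hq2 : q ≤ 2) (c : ℝ) (hc : 0 ≤ c) :
    ConcaveOn ℝ (Set.Ici 0) (fun x : ℝ => (x + c) ^ q - x ^ q) := by
  refine AntitoneOn.concaveOn_of_deriv (convex_Ici 0) (aux_cont (by linarith) c) ?_ ?_
  · rw [interior_Ici]
    intro x hx
    exact (aux_hasDeriv c hc hx).differentiableAt.differentiableWithinAt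
  · rw [interior_Ici]
    intro a ha b hb hab
    rw [(aux_hasDeriv c hc ha).deriv, (aux_hasDeriv c hc hb).deriv]
    have key := aux_antitone (p := q - 1) (by linarith) (by linarith) c hc
      (Set.mem_Ici.mpr (le_of_lt (Set.mem_Ioi.mp ha)))
      (Set.mem_Ici.mpr (le_of_lt (lt_of_lt_of_le (Set.mem_Ioi.mp ha) hab))) hab
    simp only at key
    nlinarith

lemma rpow_superadd {q x y : ℝ} (hq : 1 ≤ q) (hx : 0 ≤ x) (hy : 0 ≤ y) :
    x ^ q + y ^ q ≤ (x + y) ^ q := by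
  have h := NNReal.add_rpow_le_rpow_add x.toNNReal y.toNNReal hq
  have := (NNReal.coe_le_coe).mpr h
  push_cast [NNReal.coe_rpow] at this
  rwa [Real.coe_toNNReal x hx, Real.coe_toNNReal y hy] at this

lemma rpow_two_mul {q x y : ℝ} (hq : 0 ≤ q) (hx : 0 ≤ x) (hy : 0 ≤ y) :
    (x + y) ^ q ≤ 2 ^ q * (x ^ q + y ^ q) := by
  have h1 : x + y ≤ 2 * max x y := by
    rcases max_cases x y with ⟨h, h'⟩ | ⟨h, h'⟩ <;> rw [h] <;> linarith
  have h2 : (x + y) ^ q ≤ (2 * max x y) ^ q :=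
    Real.rpow_le_rpow (by linarith) h1 hq
  rw [Real.mul_rpow (by norm_num) (le_max_of_le_left hx)] at h2
  refine h2.trans (mul_le_mul_of_nonneg_left ?_ (Real.rpow_nonneg (by norm_num) q))
  rcases max_cases x y with ⟨h, _⟩ | ⟨h, _⟩ <;> rw [h] <;>
    [nlinarith [Real.rpow_nonneg hy q]; nlinarith [Real.rpow_nonneg hx q]]

lemma integ_aux {ν : Measure ℝ} [IsProbabilityMeasure ν] {q c : ℝ} (hq1 : 1 < q) (hc : 0 ≤ c)
    (hae : ∀ᵐ y ∂ν, y ∈ Set.Ici (0 : ℝ)) (hq' : Integrable (fun y : ℝ => y ^ q) ν) :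
    Integrable (fun y : ℝ => (y + c) ^ q - y ^ q - c ^ q) ν := by
  have hq0 : (0 : ℝ) < q := by linarith
  refine ((hq'.const_mul (2 ^ q)).add (integrable_const (2 ^ q * c ^ q))).mono' ?_ ?_
  · exact ((((measurable_id.add measurable_const).pow measurable_const).sub
      (measurable_id.pow measurable_const)).sub measurable_const).aestronglyMeasurable
  · simp only [Pi.add_apply]
    filter_upwards [hae] with y hy
    have h0 : 0 ≤ (y + c) ^ q - y ^ q - c ^ q := by
      have := rpow_superadd hq1.le hy hc; linarith
    rw [Real.norm_of_nonneg h0]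
    have h2 := rpow_two_mul hq0.le hy hc
    have hcq := Real.rpow_nonneg hc q
    have hyq := Real.rpow_nonneg hy q
    linarith

lemma jensen_step {ν : Measure ℝ} [IsProbabilityMeasure ν] {q c : ℝ} (hq1 : 1 < q) (hq2 : q ≤ 2)
    (hc : 0 ≤ c) (hae : ∀ᵐ y ∂ν, y ∈ Set.Ici (0 : ℝ)) (hid : Integrable id ν)
    (hq' : Integrable (fun y : ℝ => y ^ q) ν) :
    ∫ y, ((y + c) ^ q - y ^ q - c ^ q) ∂ν
      ≤ ((∫ y, y ∂ν) + c) ^ q - (∫ y, y ∂ν) ^ q - c ^ q := by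
  have hq0 : (0 : ℝ) < q := by linarith
  have hg : ConcaveOn ℝ (Set.Ici 0) (fun y : ℝ => (y + c) ^ q - y ^ q - c ^ q) := by
    have h1 := aux_concave hq1 hq2 c hc
    have h2 : ConvexOn ℝ (Set.Ici (0 : ℝ)) (fun _ : ℝ => c ^ q) :=
      convexOn_const _ (convex_Ici 0)
    exact h1.sub h2
  have hgc : ContinuousOn (fun y : ℝ => (y + c) ^ q - y ^ q - c ^ q) (Set.Ici 0) :=
    (aux_cont hq0 c).sub continuousOn_const
  have hgint := integ_aux hq1 hc hae hq'
  have h := hg.le_map_integral hgc isClosed_Ici hae hid hgint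
  simpa using h

theorem neveu_inequality {Ω : Type*} [MeasurableSpace Ω] (μ : Measure Ω)
    [IsProbabilityMeasure μ] (q : ℝ) (hq1 : 1 < q) (hq2 : q ≤ 2)
    (X Y : Ω → ℝ) (hXm : Measurable X) (hYm : Measurable Y)
    (hX0 : ∀ ω, 0 ≤ X ω) (hY0 : ∀ ω, 0 ≤ Y ω)
    (hXq : Integrable (fun ω => X ω ^ q) μ) (hYq : Integrable (fun ω => Y ω ^ q) μ)
    (hindep : IndepFun X Y μ)
    (V : (Ω → ℝ) → ℝ) (hV : ∀ Z : Ω → ℝ, V Z = ∫ ω, Z ω ^ q ∂μ - (∫ ω, Z ω ∂μ) ^ q) :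
    V (X + Y) ≤ V X + V Y := by
  have hq0 : (0 : ℝ) < q := by linarith
  -- basic integrability
  have self_le : ∀ x : ℝ, 0 ≤ x → x ≤ x ^ q + 1 := by
    intro x hx
    rcases le_or_gt x 1 with h | h
    · have := Real.rpow_nonneg hx q; linarith
    · have h2 : x ^ (1 : ℝ) ≤ x ^ q := Real.rpow_le_rpow_of_exponent_le h.le hq1.le
      rw [Real.rpow_one] at h2; linarith
  have hXint : Integrable X μ := by
    refine (hXq.add (integrable_const 1)).mono' hXm.aestronglyMeasurable ?_
    filter_upwards with ω
    rw [Real.norm_of_nonneg (hX0 ω)]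
    exact self_le _ (hX0 ω)
  have hYint : Integrable Y μ := by
    refine (hYq.add (integrable_const 1)).mono' hYm.aestronglyMeasurable ?_
    filter_upwards with ω
    rw [Real.norm_of_nonneg (hY0 ω)]
    exact self_le _ (hY0 ω)
  have hSmeas : Measurable fun ω => (X ω + Y ω) ^ q := (hXm.add hYm).pow measurable_const
  have hSq : Integrable (fun ω => (X ω + Y ω) ^ q) μ := by
    refine ((hXq.add hYq).const_mul (2 ^ q)).mono' hSmeas.aestronglyMeasurable ?_
    filter_upwards with ω
    rw [Real.norm_of_nonneg (Real.rpow_nonneg (add_nonneg (hX0 ω) (hY0 ω)) q)]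
    exact rpow_two_mul hq0.le (hX0 ω) (hY0 ω)
  have hfXY : Integrable (fun ω => (X ω + Y ω) ^ q - X ω ^ q - Y ω ^ q) μ :=
    (hSq.sub hXq).sub hYq
  -- map measures
  have : IsProbabilityMeasure (μ.map X) := Measure.isProbabilityMeasure_map hXm.aemeasurable
  have : IsProbabilityMeasure (μ.map Y) := Measure.isProbabilityMeasure_map hYm.aemeasurable
  have hPm : Measurable (fun ω => (X ω, Y ω)) := hXm.prodMk hYm
  have hmapXY : μ.map (fun ω => (X ω, Y ω)) = (μ.map X).prod (μ.map Y) :=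
    (indepFun_iff_map_prod_eq_prod_map_map hXm.aemeasurable hYm.aemeasurable).mp hindep
  set F : ℝ × ℝ → ℝ := fun p => (p.1 + p.2) ^ q - p.1 ^ q - p.2 ^ q with hF
  have hFmeas : Measurable F :=
    (((measurable_fst.add measurable_snd).pow measurable_const).sub
      (measurable_fst.pow measurable_const)).sub (measurable_snd.pow measurable_const)
  have hFint : Integrable F ((μ.map X).prod (μ.map Y)) := by
    rw [← hmapXY, integrable_map_measure hFmeas.aestronglyMeasurable hPm.aemeasurable]
    exact hfXY
  have hstep0 : ∫ ω, ((X ω + Y ω) ^ q - X ω ^ q - Y ω ^ q) ∂μ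
      = ∫ x, ∫ y, F (x, y) ∂(μ.map Y) ∂(μ.map X) := by
    calc ∫ ω, ((X ω + Y ω) ^ q - X ω ^ q - Y ω ^ q) ∂μ
        = ∫ p, F p ∂(μ.map (fun ω => (X ω, Y ω))) :=
          (integral_map hPm.aemeasurable hFmeas.aestronglyMeasurable).symm
      _ = ∫ p, F p ∂((μ.map X).prod (μ.map Y)) := by rw [hmapXY]
      _ = ∫ x, ∫ y, F (x, y) ∂(μ.map Y) ∂(μ.map X) := integral_prod F hFint
  -- support and integrability on map measures
  have haeX : ∀ᵐ x ∂(μ.map X), x ∈ Set.Ici (0 : ℝ) := by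
    exact (ae_map_iff hXm.aemeasurable measurableSet_Ici).mpr (ae_of_all _ hX0)
  have haeY : ∀ᵐ y ∂(μ.map Y), y ∈ Set.Ici (0 : ℝ) := by
    exact (ae_map_iff hYm.aemeasurable measurableSet_Ici).mpr (ae_of_all _ hY0)
  have hXid : Integrable id (μ.map X) := by
    rw [integrable_map_measure aestronglyMeasurable_id hXm.aemeasurable]
    exact hXint
  have hYid : Integrable id (μ.map Y) := by
    rw [integrable_map_measure aestronglyMeasurable_id hYm.aemeasurable]
    exact hYint
  have hXq' : Integrable (fun x : ℝ => x ^ q) (μ.map X) := by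
    rw [integrable_map_measure
      ((measurable_id'.pow measurable_const).aestronglyMeasurable) hXm.aemeasurable]
    exact hXq
  have hYq' : Integrable (fun y : ℝ => y ^ q) (μ.map Y) := by
    rw [integrable_map_measure
      ((measurable_id'.pow measurable_const).aestronglyMeasurable) hYm.aemeasurable]
    exact hYq
  have hEXmap : ∫ x, x ∂(μ.map X) = ∫ ω, X ω ∂μ :=
    integral_map hXm.aemeasurable aestronglyMeasurable_id
  have hEYmap : ∫ y, y ∂(μ.map Y) = ∫ ω, Y ω ∂μ :=
    integral_map hYm.aemeasurable aestronglyMeasurable_id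
  set EX := ∫ ω, X ω ∂μ with hEXdef
  set EY := ∫ ω, Y ω ∂μ with hEYdef
  have hEX0 : 0 ≤ EX := integral_nonneg hX0
  have hEY0 : 0 ≤ EY := integral_nonneg hY0
  -- inner Jensen, a.e. in x
  have hae_ineq : ∀ᵐ x ∂(μ.map X),
      (∫ y, F (x, y) ∂(μ.map Y)) ≤ (x + EY) ^ q - x ^ q - EY ^ q := by
    filter_upwards [haeX] with x hx
    have h := jensen_step hq1 hq2 (hx : (0:ℝ) ≤ x) haeY hYid hYq'
    rw [hEYmap] at h
    have hfun : (fun y : ℝ => F (x, y)) = fun y : ℝ => (y + x) ^ q - y ^ q - x ^ q := by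
      funext y
      simp only [hF]
      rw [add_comm x y]
      ring
    rw [hfun]
    have : (EY + x) ^ q = (x + EY) ^ q := by rw [add_comm]
    linarith [h, this ▸ h]
  -- integrability of both sides in x
  have hI1 : Integrable (fun x => ∫ y, F (x, y) ∂(μ.map Y)) (μ.map X) :=
    hFint.integral_prod_left
  have hI2 : Integrable (fun x : ℝ => (x + EY) ^ q - x ^ q - EY ^ q) (μ.map X) :=
    integ_aux hq1 hEY0 haeX hXq'
  have houter := jensen_step (ν := μ.map X) hq1 hq2 hEY0 haeX hXid hXq'
  rw [hEXmap] at houter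
  have key : ∫ ω, ((X ω + Y ω) ^ q - X ω ^ q - Y ω ^ q) ∂μ
      ≤ (EX + EY) ^ q - EX ^ q - EY ^ q := by
    rw [hstep0]
    calc ∫ x, ∫ y, F (x, y) ∂(μ.map Y) ∂(μ.map X)
        ≤ ∫ x, ((x + EY) ^ q - x ^ q - EY ^ q) ∂(μ.map X) :=
          integral_mono_ae hI1 hI2 hae_ineq
      _ ≤ (EX + EY) ^ q - EX ^ q - EY ^ q := houter
  have hsplit : ∫ ω, ((X ω + Y ω) ^ q - X ω ^ q - Y ω ^ q) ∂μ
      = (∫ ω, (X ω + Y ω) ^ q ∂μ) - (∫ ω, X ω ^ q ∂μ) - (∫ ω, Y ω ^ q ∂μ) := by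
    have h2 : ∫ ω, ((X ω + Y ω) ^ q - X ω ^ q - Y ω ^ q) ∂μ
        = (∫ ω, ((X ω + Y ω) ^ q - X ω ^ q) ∂μ) - ∫ ω, Y ω ^ q ∂μ :=
      integral_sub (hSq.sub hXq) hYq
    have h1 : ∫ ω, ((X ω + Y ω) ^ q - X ω ^ q) ∂μ
        = (∫ ω, (X ω + Y ω) ^ q ∂μ) - ∫ ω, X ω ^ q ∂μ := integral_sub hSq hXq
    rw [h2, h1]
  have hsum : ∫ ω, (X ω + Y ω) ∂μ = EX + EY := integral_add hXint hYint
  rw [hV (X + Y), hV X, hV Y]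
  simp only [Pi.add_apply]
  rw [hsum]
  linarith [key, hsplit]
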